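/- Let B ⊆ ℝ³ be open and connected, and let ζ : B × [0,∞) → ℝ³ be such that for each t ≥ 0 the map ζ(·, t) is continuously differentiable, injective, with det Dₓζ(x, t) > 0 for all x ∈ B, and suppose the right Cauchy–Green tensor is independent of time: (Dₓζ(x, t))ᵀ Dₓζ(x, t) = (Dₓζ(x, 0))ᵀ Dₓζ(x, 0) for all x ∈ B and t ≥ 0. Then the motion is rigid: for each t ≥ 0 there exist a unique rotation R(t) ∈ SO(3) and a unique vector b(t) ∈ ℝ³ such that ζ(x, t) = R(t) ζ(x, 0) + b(t) for all x ∈ B. Moreover, if for each x ∈ B the curve t ↦ ζ(x, t) is C² in t, then t ↦ R(t) and t ↦ b(t) are C². -/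

import Mathlib

open Matrix

/-- The Jacobian matrix (with respect to the space variable, within `B`) of a
configuration `ζ : B → ℝ³` at `x`. -/
noncomputable def jacobianMat (B : Set (Fin 3 → ℝ))
    (ζ : (Fin 3 → ℝ) → (Fin 3 → ℝ)) (x : Fin 3 → ℝ) : Matrix (Fin 3) (Fin 3) ℝ :=
  Matrix.of fun i j => fderivWithin ℝ ζ B x (Pi.single j 1) i

namespace RigidAux


/-- A matrix as a continuous linear map. -/
noncomputable def clm (M : Matrix (Fin 3) (Fin 3) ℝ) : (Fin 3 → ℝ) →L[ℝ] (Fin 3 → ℝ) :=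
  LinearMap.toContinuousLinearMap M.mulVecLin

@[simp] lemma clm_apply (M : Matrix (Fin 3) (Fin 3) ℝ) (v : Fin 3 → ℝ) :
    clm M v = M.mulVec v := rfl

lemma mulVec_single_one (M : Matrix (Fin 3) (Fin 3) ℝ) (j : Fin 3) :
    M.mulVec (Pi.single j 1) = fun i => M i j := by
  funext i
  simp [Matrix.mulVec, dotProduct, Pi.single_apply]

lemma hasFDerivAt_of_jac {B : Set (Fin 3 → ℝ)} (hB : IsOpen B)
    {f : (Fin 3 → ℝ) → (Fin 3 → ℝ)} (hf : ContDiffOn ℝ 1 f B)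
    {x : Fin 3 → ℝ} (hx : x ∈ B) : HasFDerivAt f (clm (jacobianMat B f x)) x := by
  have hca : ContDiffAt ℝ 1 f x := hf.contDiffAt (hB.mem_nhds hx)
  have hd : DifferentiableAt ℝ f x := hca.differentiableAt one_ne_zero
  have key : clm (jacobianMat B f x) = fderiv ℝ f x := by
    apply ContinuousLinearMap.ext
    intro v
    have hv : v = ∑ j, (v j) • (Pi.single j (1:ℝ) : Fin 3 → ℝ) := by
      have : ∀ j : Fin 3, (v j) • (Pi.single j (1:ℝ) : Fin 3 → ℝ) = Pi.single j (v j) := by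
        intro j
        rw [← Pi.single_smul]
        norm_num
      simp only [this, Finset.univ_sum_single]
    conv_rhs => rw [hv]
    rw [map_sum]
    funext i
    simp only [clm_apply, Matrix.mulVec, dotProduct, jacobianMat, Matrix.of_apply,
      fderivWithin_of_isOpen hB hx, Finset.sum_apply, _root_.map_smul, Pi.smul_apply, smul_eq_mul]
    exact Finset.sum_congr rfl fun j _ => mul_comm _ _
  rw [key]
  exact hd.hasFDerivAt

lemma sum_sq_mulVec_eq {M N : Matrix (Fin 3) (Fin 3) ℝ} (h : Mᵀ * M = Nᵀ * N)
    (v : Fin 3 → ℝ) : ∑ i, (M.mulVec v i)^2 = ∑ i, (N.mulVec v i)^2 := by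
  have key : ∀ P : Matrix (Fin 3) (Fin 3) ℝ,
      ∑ i, (P.mulVec v i)^2 = v ⬝ᵥ (Pᵀ * P).mulVec v := by
    intro P
    have h1 : ∑ i, (P.mulVec v i)^2 = (P.mulVec v) ⬝ᵥ (P.mulVec v) := by
      simp [dotProduct, sq]
    rw [h1, ← Matrix.mulVec_mulVec, Matrix.mulVec_transpose, dotProduct_comm v,
      ← Matrix.dotProduct_mulVec]
  rw [key M, key N, h]

/-- A function that is locally constant on an open preconnected set is constant there. -/
lemma eq_on_connected {α : Type*} {B : Set (Fin 3 → ℝ)}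
    (hconn : IsPreconnected B) (u : (Fin 3 → ℝ) → α)
    (r : (Fin 3 → ℝ) → ℝ) (hr : ∀ x ∈ B, 0 < r x)
    (hloc : ∀ x ∈ B, Metric.ball x (r x) ⊆ B ∧ ∀ y ∈ Metric.ball x (r x), u y = u x)
    {x₀ x : Fin 3 → ℝ} (hx₀ : x₀ ∈ B) (hx : x ∈ B) : u x = u x₀ := by
  by_contra hne
  set U : Set (Fin 3 → ℝ) := ⋃ (z : Fin 3 → ℝ) (_ : z ∈ B ∧ u z = u x₀), Metric.ball z (r z)
  set W : Set (Fin 3 → ℝ) := ⋃ (z : Fin 3 → ℝ) (_ : z ∈ B ∧ u z ≠ u x₀), Metric.ball z (r z)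
  have hUopen : IsOpen U := isOpen_iUnion fun z => isOpen_iUnion fun _ => Metric.isOpen_ball
  have hWopen : IsOpen W := isOpen_iUnion fun z => isOpen_iUnion fun _ => Metric.isOpen_ball
  have hcover : B ⊆ U ∪ W := by
    intro y hy
    by_cases hc : u y = u x₀
    · exact Or.inl (Set.mem_iUnion₂.2 ⟨y, ⟨hy, hc⟩, Metric.mem_ball_self (hr y hy)⟩)
    · exact Or.inr (Set.mem_iUnion₂.2 ⟨y, ⟨hy, hc⟩, Metric.mem_ball_self (hr y hy)⟩)
  have hU : (B ∩ U).Nonempty := ⟨x₀, hx₀,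
    Set.mem_iUnion₂.2 ⟨x₀, ⟨hx₀, rfl⟩, Metric.mem_ball_self (hr x₀ hx₀)⟩⟩
  have hW : (B ∩ W).Nonempty := ⟨x, hx,
    Set.mem_iUnion₂.2 ⟨x, ⟨hx, hne⟩, Metric.mem_ball_self (hr x hx)⟩⟩
  obtain ⟨y, _, hyU, hyW⟩ := hconn U W hUopen hWopen hcover hU hW
  obtain ⟨a, ⟨haB, ha⟩, hya⟩ := Set.mem_iUnion₂.1 hyU
  obtain ⟨b, ⟨hbB, hb⟩, hyb⟩ := Set.mem_iUnion₂.1 hyW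
  have h1 : u y = u a := (hloc a haB).2 y hya
  have h2 : u y = u b := (hloc b hbB).2 y hyb
  exact hb (h2 ▸ h1 ▸ ha)


abbrev E3 := EuclideanSpace ℝ (Fin 3)

lemma isom_affine {ρ : ℝ} (hρ : 0 < ρ) {d : E3 → E3} {y₀ : E3}
    (hd : ∀ a ∈ Metric.ball y₀ ρ, ∀ b ∈ Metric.ball y₀ ρ, ‖d a - d b‖ = ‖a - b‖) :
    ∃ w : Fin 3 → E3, (∀ i j : Fin 3, (inner ℝ (w i) (w j) : ℝ) = if i = j then 1 else 0) ∧
      ∀ y ∈ Metric.ball y₀ ρ, d y = d y₀ + ∑ i, (y i - y₀ i) • w i := by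
  set T : E3 → E3 := fun v => d (y₀ + v) - d y₀ with hTdef
  have hmem : ∀ v : E3, ‖v‖ < ρ → y₀ + v ∈ Metric.ball y₀ ρ := by
    intro v hv
    rw [Metric.mem_ball, dist_eq_norm]
    simpa using hv
  have hT : ∀ u v : E3, ‖u‖ < ρ → ‖v‖ < ρ → ‖T u - T v‖ = ‖u - v‖ := by
    intro u v hu hv
    have : T u - T v = d (y₀ + u) - d (y₀ + v) := by
      simp only [hTdef]; abel
    rw [this, hd _ (hmem u hu) _ (hmem v hv), add_sub_add_left_eq_sub]
  have hT0 : ∀ v : E3, ‖v‖ < ρ → ‖T v‖ = ‖v‖ := by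
    intro v hv
    have h0 : T 0 = 0 := by simp [hTdef]
    have := hT v 0 hv (by simpa using hρ)
    simpa [h0] using this
  have hinner : ∀ u v : E3, ‖u‖ < ρ → ‖v‖ < ρ →
      (inner ℝ (T u) (T v) : ℝ) = inner ℝ u v := by
    intro u v hu hv
    have h1 := norm_sub_sq_real (T u) (T v)
    have h2 := norm_sub_sq_real u v
    rw [hT u v hu hv, hT0 u hu, hT0 v hv] at h1
    linarith
  set ε : ℝ := ρ/2 with hεdef
  have hε : 0 < ε := by positivity
  have hεn : ∀ i : Fin 3, ‖(ε • EuclideanSpace.single i (1:ℝ) : E3)‖ = ε := by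
    intro i
    rw [norm_smul, EuclideanSpace.norm_single]
    simp [abs_of_pos hε]
  have hεlt : ∀ i : Fin 3, ‖(ε • EuclideanSpace.single i (1:ℝ) : E3)‖ < ρ := by
    intro i; rw [hεn i]; linarith
  set w : Fin 3 → E3 := fun i => ε⁻¹ • T (ε • EuclideanSpace.single i (1:ℝ)) with hwdef
  have horth : ∀ i j : Fin 3, (inner ℝ (w i) (w j) : ℝ) = if i = j then 1 else 0 := by
    intro i j
    rw [hwdef]
    simp only [real_inner_smul_left, real_inner_smul_right]
    rw [hinner _ _ (hεlt i) (hεlt j)]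
    simp only [real_inner_smul_left, real_inner_smul_right,
      EuclideanSpace.inner_single_left, EuclideanSpace.single_apply, conj_trivial]
    by_cases h : i = j <;> field_simp [h]
  have hTw : ∀ v : E3, ‖v‖ < ρ → ∀ i : Fin 3, (inner ℝ (T v) (w i) : ℝ) = v i := by
    intro v hv i
    rw [hwdef]
    simp only [real_inner_smul_right]
    rw [hinner _ _ hv (hεlt i)]
    simp only [real_inner_smul_right, EuclideanSpace.inner_single_right, conj_trivial]
    field_simp
  have hvv : ∀ v : E3, (inner ℝ v v : ℝ) = ∑ i, (v i)^2 := by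
    intro v
    rw [PiLp.inner_apply]
    simp [RCLike.inner_apply, sq]
  have hkey : ∀ v : E3, ‖v‖ < ρ → T v = ∑ i, v i • w i := by
    intro v hv
    have e1 : (inner ℝ (T v) (∑ i, v i • w i) : ℝ) = ∑ i, (v i)^2 := by
      rw [inner_sum]
      simp only [real_inner_smul_right, hTw v hv, sq]
    have e2 : (inner ℝ (∑ i, v i • w i) (T v) : ℝ) = ∑ i, (v i)^2 := by
      rw [sum_inner]
      simp only [real_inner_smul_left]
      refine Finset.sum_congr rfl fun i _ => ?_
      rw [real_inner_comm, hTw v hv, sq]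
    have e3 : (inner ℝ (∑ i, v i • w i) (∑ j, v j • w j) : ℝ) = ∑ i, (v i)^2 := by
      rw [sum_inner]
      refine Finset.sum_congr rfl fun i _ => ?_
      rw [inner_sum]
      simp only [real_inner_smul_left, real_inner_smul_right, horth]
      rw [Finset.sum_eq_single i]
      · simp [sq]
      · intro j _ hj
        simp [Ne.symm hj]
      · simp
    have e4 : (inner ℝ (T v) (T v) : ℝ) = ∑ i, (v i)^2 := by
      rw [hinner v v hv hv, hvv]
    have hz : (inner ℝ (T v - ∑ i, v i • w i) (T v - ∑ i, v i • w i) : ℝ) = 0 := by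
      obtain ⟨A, hA⟩ : ∃ A, T v = A := ⟨_, rfl⟩
      obtain ⟨S, hS⟩ : ∃ S, (∑ i, v i • w i : E3) = S := ⟨_, rfl⟩
      rw [hA] at e1 e2 e4
      rw [hS] at e1 e2 e3
      rw [hA, hS, inner_sub_left, inner_sub_right, inner_sub_right, e1, e2, e3, e4]
      ring
    have := inner_self_eq_zero.mp hz
    exact sub_eq_zero.mp this
  refine ⟨w, horth, fun y hy => ?_⟩
  have hv : ‖y - y₀‖ < ρ := by
    rw [← dist_eq_norm]
    exact Metric.mem_ball.mp hy
  have h1 := hkey (y - y₀) hv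
  have h2 : T (y - y₀) = d y - d y₀ := by
    simp [hTdef]
  rw [h2] at h1
  have h3 : ∀ i : Fin 3, (y - y₀) i = y i - y₀ i := fun i => rfl
  simp only [h3] at h1
  rw [← h1]
  abel


noncomputable def e3 : E3 ≃L[ℝ] (Fin 3 → ℝ) :=
  PiLp.continuousLinearEquiv 2 ℝ (fun _ : Fin 3 => ℝ)

lemma sup_le_euc (u : E3) : ‖e3 u‖ ≤ ‖u‖ := by
  rw [pi_norm_le_iff_of_nonneg (norm_nonneg u)]
  intro i
  have h1 : ‖e3 u i‖ = Real.sqrt ((u i)^2) := by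
    rw [Real.sqrt_sq_eq_abs, Real.norm_eq_abs]; rfl
  rw [h1, EuclideanSpace.norm_eq]
  apply Real.sqrt_le_sqrt
  have := Finset.single_le_sum (f := fun j => ‖u j‖^2) (fun j _ => by positivity)
    (Finset.mem_univ i)
  simpa [Real.norm_eq_abs, sq_abs] using this

lemma euc_le_sup (v : Fin 3 → ℝ) : ‖e3.symm v‖ ≤ 2 * ‖v‖ := by
  rw [EuclideanSpace.norm_eq]
  have h1 : ∀ i : Fin 3, ‖e3.symm v i‖^2 ≤ ‖v‖^2 := by
    intro i
    have heq : ‖e3.symm v i‖ = ‖v i‖ := rfl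
    rw [heq]
    have := norm_le_pi_norm v i
    have h0 : (0:ℝ) ≤ ‖v i‖ := norm_nonneg _
    nlinarith
  have h2 : ∑ i : Fin 3, ‖e3.symm v i‖^2 ≤ (2*‖v‖)^2 := by
    have := Finset.sum_le_sum (fun i (_ : i ∈ Finset.univ) => h1 i)
    simp only [Finset.sum_const, Finset.card_univ, Fintype.card_fin, nsmul_eq_mul] at this
    push_cast at this
    nlinarith [norm_nonneg v, sq_nonneg (‖v‖)]
  calc Real.sqrt (∑ i : Fin 3, ‖e3.symm v i‖^2) ≤ Real.sqrt ((2*‖v‖)^2) :=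
        Real.sqrt_le_sqrt h2
    _ = 2*‖v‖ := Real.sqrt_sq (by positivity)

lemma euc_norm_eq (u : Fin 3 → ℝ) :
    ‖(e3.symm u : E3)‖ = Real.sqrt (∑ i, (u i)^2) := by
  rw [EuclideanSpace.norm_eq]
  refine congrArg Real.sqrt (Finset.sum_congr rfl fun i _ => ?_)
  have heq : ‖e3.symm u i‖ = ‖u i‖ := rfl
  rw [heq, Real.norm_eq_abs, sq_abs]

lemma deriv_norm_one {B : Set (Fin 3 → ℝ)} (hB : IsOpen B)
    {f g : (Fin 3 → ℝ) → (Fin 3 → ℝ)}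
    (hf : ContDiffOn ℝ 1 f B) (hg : ContDiffOn ℝ 1 g B)
    (hGdet : ∀ x ∈ B, (jacobianMat B g x).det ≠ 0)
    (hnorm : ∀ x ∈ B, ∀ w : Fin 3 → ℝ,
      ∑ i, ((jacobianMat B f x).mulVec w i)^2 =
      ∑ i, ((jacobianMat B g x).mulVec w i)^2)
    (P : OpenPartialHomeomorph (Fin 3 → ℝ) (Fin 3 → ℝ)) (hPcoe : ⇑P = g)
    {y : Fin 3 → ℝ} (hytgt : y ∈ P.target) (hxB : P.symm y ∈ B) :
    ∃ D : E3 →L[ℝ] E3,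
      HasFDerivAt (fun z : E3 => e3.symm (f (P.symm (e3 z)))) D (e3.symm y) ∧
      ∀ v : E3, ‖D v‖ = ‖v‖ := by
  set x := P.symm y with hxdef
  set G := jacobianMat B g x
  set F := jacobianMat B f x
  have hGi : Invertible G := G.invertibleOfIsUnitDet (isUnit_iff_ne_zero.2 (hGdet x hxB))
  set gE : (Fin 3 → ℝ) ≃L[ℝ] (Fin 3 → ℝ) :=
    LinearEquiv.toContinuousLinearEquiv (G.toLinearEquiv' hGi) with hgEdef
  have hcoe : (gE : (Fin 3 → ℝ) →L[ℝ] (Fin 3 → ℝ)) = clm G := by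
    apply ContinuousLinearMap.ext
    intro v
    show Matrix.toLin' G v = G.mulVecLin v
    rw [Matrix.toLin'_apply]; rfl
  have hgd : HasFDerivAt g (clm G) x := hasFDerivAt_of_jac hB hg hxB
  have hP : HasFDerivAt (⇑P) ((gE : (Fin 3 → ℝ) →L[ℝ] (Fin 3 → ℝ))) x := by
    rw [hPcoe, hcoe]; exact hgd
  have hι : HasFDerivAt (⇑P.symm)
      ((gE.symm : (Fin 3 → ℝ) →L[ℝ] (Fin 3 → ℝ))) y := P.hasFDerivAt_symm hytgt hP
  have hfd : HasFDerivAt f (clm F) x := hasFDerivAt_of_jac hB hf hxB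
  have hc1 : HasFDerivAt (f ∘ ⇑P.symm)
      ((clm F).comp (gE.symm : (Fin 3 → ℝ) →L[ℝ] (Fin 3 → ℝ))) y := hfd.comp y hι
  refine ⟨((e3.symm : (Fin 3 → ℝ) →L[ℝ] E3).comp
      ((clm F).comp (gE.symm : (Fin 3 → ℝ) →L[ℝ] (Fin 3 → ℝ)))).comp
      (e3 : E3 →L[ℝ] (Fin 3 → ℝ)), ?_, ?_⟩
  · have h2 : HasFDerivAt ((f ∘ ⇑P.symm) ∘ ⇑(e3 : E3 →L[ℝ] (Fin 3 → ℝ)))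
        (((clm F).comp (gE.symm : (Fin 3 → ℝ) →L[ℝ] (Fin 3 → ℝ))).comp
          (e3 : E3 →L[ℝ] (Fin 3 → ℝ))) (e3.symm y) :=
      HasFDerivAt.comp _ hc1 (e3 : E3 →L[ℝ] (Fin 3 → ℝ)).hasFDerivAt
    have h3 := HasFDerivAt.comp (x := e3.symm y)
      (e3.symm : (Fin 3 → ℝ) →L[ℝ] E3).hasFDerivAt h2
    exact h3
  · intro v
    set wv := gE.symm (e3 v) with hwv
    have hgw : G.mulVec wv = e3 v := by
      have h4 : gE wv = e3 v := gE.apply_symm_apply (e3 v)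
      have h5 : gE wv = clm G wv := by rw [← hcoe]; rfl
      rw [← h4, h5, clm_apply]
    have hDv : (((e3.symm : (Fin 3 → ℝ) →L[ℝ] E3).comp
        ((clm F).comp (gE.symm : (Fin 3 → ℝ) →L[ℝ] (Fin 3 → ℝ)))).comp
        (e3 : E3 →L[ℝ] (Fin 3 → ℝ))) v = e3.symm (F.mulVec wv) := rfl
    rw [hDv]
    calc ‖(e3.symm (F.mulVec wv) : E3)‖ = Real.sqrt (∑ i, (F.mulVec wv i)^2) :=
          euc_norm_eq _
      _ = Real.sqrt (∑ i, (G.mulVec wv i)^2) := by rw [hnorm x hxB wv]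
      _ = ‖(e3.symm (G.mulVec wv) : E3)‖ := (euc_norm_eq _).symm
      _ = ‖(e3.symm (e3 v) : E3)‖ := by rw [hgw]
      _ = ‖v‖ := by rw [e3.symm_apply_apply]

lemma lip_on_ball {φ : E3 → E3} {s : Set E3} (hconv : Convex ℝ s)
    (h : ∀ y ∈ s, ∃ D : E3 →L[ℝ] E3, HasFDerivAt φ D y ∧ ∀ v, ‖D v‖ = ‖v‖) :
    ∀ a ∈ s, ∀ b ∈ s, ‖φ a - φ b‖ ≤ ‖a - b‖ := by
  classical
  choose D hD hDn using h
  have hderiv : ∀ y (hy : y ∈ s), HasFDerivWithinAt φ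
      (if hy : y ∈ s then D y hy else 0) s y := by
    intro y hy
    rw [dif_pos hy]
    exact (hD y hy).hasFDerivWithinAt
  have hbound : ∀ y (hy : y ∈ s), ‖if hy : y ∈ s then D y hy else 0‖ ≤ 1 := by
    intro y hy
    rw [dif_pos hy]
    exact ContinuousLinearMap.opNorm_le_bound _ zero_le_one
      (fun v => by rw [hDn y hy v, one_mul])
  intro a ha b hb
  have := hconv.norm_image_sub_le_of_norm_hasFDerivWithin_le
    (f' := fun y => if hy : y ∈ s then D y hy else 0) hderiv hbound hb ha
  simpa using this


lemma cle_coe (M : Matrix (Fin 3) (Fin 3) ℝ) (h : Invertible M) :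
    ((M.toLinearEquiv' h).toContinuousLinearEquiv :
      (Fin 3 → ℝ) →L[ℝ] (Fin 3 → ℝ)) = clm M := by
  apply ContinuousLinearMap.ext
  intro v
  show Matrix.toLin' M v = M.mulVecLin v
  rw [Matrix.toLin'_apply]; rfl

lemma local_rigid {B : Set (Fin 3 → ℝ)} (hB : IsOpen B)
    {f g : (Fin 3 → ℝ) → (Fin 3 → ℝ)}
    (hf : ContDiffOn ℝ 1 f B) (hg : ContDiffOn ℝ 1 g B)
    (hFdet : ∀ x ∈ B, (jacobianMat B f x).det ≠ 0)
    (hGdet : ∀ x ∈ B, (jacobianMat B g x).det ≠ 0)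
    (hCG : ∀ x ∈ B, (jacobianMat B f x)ᵀ * jacobianMat B f x =
        (jacobianMat B g x)ᵀ * jacobianMat B g x)
    {x₀ : Fin 3 → ℝ} (hx₀ : x₀ ∈ B) :
    ∃ r > 0, Metric.ball x₀ r ⊆ B ∧ ∃ Q c, Qᵀ * Q = 1 ∧
      ∀ x ∈ Metric.ball x₀ r, f x = Q.mulVec (g x) + c := by
  have hnfg : ∀ x ∈ B, ∀ w : Fin 3 → ℝ,
      ∑ i, ((jacobianMat B f x).mulVec w i)^2 =
      ∑ i, ((jacobianMat B g x).mulVec w i)^2 :=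
    fun x hx w => sum_sq_mulVec_eq (hCG x hx) w
  -- strict derivatives at x₀, as continuous linear equivs
  have hGi : Invertible (jacobianMat B g x₀) :=
    (jacobianMat B g x₀).invertibleOfIsUnitDet (isUnit_iff_ne_zero.2 (hGdet x₀ hx₀))
  have hFi : Invertible (jacobianMat B f x₀) :=
    (jacobianMat B f x₀).invertibleOfIsUnitDet (isUnit_iff_ne_zero.2 (hFdet x₀ hx₀))
  set gE₀ : (Fin 3 → ℝ) ≃L[ℝ] (Fin 3 → ℝ) :=
    LinearEquiv.toContinuousLinearEquiv ((jacobianMat B g x₀).toLinearEquiv' hGi)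
  set fE₀ : (Fin 3 → ℝ) ≃L[ℝ] (Fin 3 → ℝ) :=
    LinearEquiv.toContinuousLinearEquiv ((jacobianMat B f x₀).toLinearEquiv' hFi)
  have hgstrict : HasStrictFDerivAt g
      (gE₀ : (Fin 3 → ℝ) →L[ℝ] (Fin 3 → ℝ)) x₀ := by
    have h1 : HasStrictFDerivAt g (fderiv ℝ g x₀) x₀ :=
      (hg.contDiffAt (hB.mem_nhds hx₀)).hasStrictFDerivAt one_ne_zero
    have h2 : fderiv ℝ g x₀ = clm (jacobianMat B g x₀) :=
      (hasFDerivAt_of_jac hB hg hx₀).fderiv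
    rw [cle_coe, ← h2]
    exact h1
  have hfstrict : HasStrictFDerivAt f
      (fE₀ : (Fin 3 → ℝ) →L[ℝ] (Fin 3 → ℝ)) x₀ := by
    have h1 : HasStrictFDerivAt f (fderiv ℝ f x₀) x₀ :=
      (hf.contDiffAt (hB.mem_nhds hx₀)).hasStrictFDerivAt one_ne_zero
    have h2 : fderiv ℝ f x₀ = clm (jacobianMat B f x₀) :=
      (hasFDerivAt_of_jac hB hf hx₀).fderiv
    rw [cle_coe, ← h2]
    exact h1
  set P := hgstrict.toOpenPartialHomeomorph g with hPdef
  set PF := hfstrict.toOpenPartialHomeomorph f with hPFdef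
  have hPcoe : ⇑P = g := rfl
  have hPFcoe : ⇑PF = f := rfl
  have hx₀src : x₀ ∈ P.source := hgstrict.mem_toOpenPartialHomeomorph_source
  have hy₀tgt : g x₀ ∈ P.target := hgstrict.image_mem_toOpenPartialHomeomorph_target
  have hιy₀ : P.symm (g x₀) = x₀ := P.left_inv hx₀src
  have hx₀srcF : x₀ ∈ PF.source := hfstrict.mem_toOpenPartialHomeomorph_source
  have hz₀tgt : f x₀ ∈ PF.target := hfstrict.image_mem_toOpenPartialHomeomorph_target
  have hιz₀ : PF.symm (f x₀) = x₀ := PF.left_inv hx₀srcF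
  -- neighborhoods
  set W : Set (Fin 3 → ℝ) := B ∩ P.source ∩ {x | PF.symm (f x) = x} with hWdef
  have hWnhds : W ∈ nhds x₀ := by
    have h1 : {x | PF.symm (f x) = x} ∈ nhds x₀ := PF.eventually_left_inverse hx₀srcF
    exact Filter.inter_mem (Filter.inter_mem (hB.mem_nhds hx₀)
      (P.open_source.mem_nhds hx₀src)) h1
  set T : Set (Fin 3 → ℝ) := P.target ∩ ⇑P.symm ⁻¹' W with hTdef
  have hTnhds : T ∈ nhds (g x₀) := by
    refine Filter.inter_mem (P.open_target.mem_nhds hy₀tgt) ?_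
    have := (P.continuousAt_symm hy₀tgt).preimage_mem_nhds (by rw [hιy₀]; exact hWnhds)
    exact this
  set Z : Set (Fin 3 → ℝ) := PF.target ∩ ⇑PF.symm ⁻¹' (B ∩ PF.source) with hZdef
  have hZnhds : Z ∈ nhds (f x₀) := by
    refine Filter.inter_mem (PF.open_target.mem_nhds hz₀tgt) ?_
    exact (PF.continuousAt_symm hz₀tgt).preimage_mem_nhds (by
      rw [hιz₀]
      exact Filter.inter_mem (hB.mem_nhds hx₀) (PF.open_source.mem_nhds hx₀srcF))
  obtain ⟨ρ₁, hρ₁pos, hρ₁⟩ := Metric.mem_nhds_iff.mp hTnhds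
  obtain ⟨ρ₂, hρ₂pos, hρ₂⟩ := Metric.mem_nhds_iff.mp hZnhds
  set ρ := min ρ₁ ρ₂ with hρdef
  have hρpos : 0 < ρ := lt_min hρ₁pos hρ₂pos
  set φ := fun z : E3 => e3.symm (f (P.symm (e3 z))) with hφdef
  set ψ := fun z : E3 => e3.symm (g (PF.symm (e3 z))) with hψdef
  set y₀t : E3 := e3.symm (g x₀) with hy₀tdef
  set z₀t : E3 := e3.symm (f x₀) with hz₀tdef
  have hmemT : ∀ z : E3, z ∈ Metric.ball y₀t ρ → e3 z ∈ T := by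
    intro z hz
    apply hρ₁
    rw [Metric.mem_ball, dist_eq_norm]
    calc ‖e3 z - g x₀‖ = ‖e3 (z - y₀t)‖ := by
          rw [map_sub, hy₀tdef, e3.apply_symm_apply]
      _ ≤ ‖z - y₀t‖ := sup_le_euc _
      _ < ρ := by rw [← dist_eq_norm]; exact hz
      _ ≤ ρ₁ := min_le_left _ _
  have hmemZ : ∀ z : E3, z ∈ Metric.ball z₀t ρ₂ → e3 z ∈ Z := by
    intro z hz
    apply hρ₂
    rw [Metric.mem_ball, dist_eq_norm]
    calc ‖e3 z - f x₀‖ = ‖e3 (z - z₀t)‖ := by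
          rw [map_sub, hz₀tdef, e3.apply_symm_apply]
      _ ≤ ‖z - z₀t‖ := sup_le_euc _
      _ < ρ₂ := by rw [← dist_eq_norm]; exact hz
  have hφpkg : ∀ z ∈ Metric.ball y₀t ρ,
      ∃ D : E3 →L[ℝ] E3, HasFDerivAt φ D z ∧ ∀ v, ‖D v‖ = ‖v‖ := by
    intro z hz
    obtain ⟨hztgt, hzW⟩ := hmemT z hz
    obtain ⟨⟨hzB, _⟩, _⟩ := hzW
    have := deriv_norm_one hB hf hg hGdet hnfg P hPcoe hztgt hzB
    rwa [e3.symm_apply_apply] at this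
  have hψpkg : ∀ z ∈ Metric.ball z₀t ρ₂,
      ∃ D : E3 →L[ℝ] E3, HasFDerivAt ψ D z ∧ ∀ v, ‖D v‖ = ‖v‖ := by
    intro z hz
    obtain ⟨hztgt, hzpre⟩ := hmemZ z hz
    have := deriv_norm_one hB hg hf hFdet
      (fun x hx w => (hnfg x hx w).symm) PF hPFcoe hztgt hzpre.1
    rwa [e3.symm_apply_apply] at this
  have hφlip := lip_on_ball (convex_ball y₀t ρ) hφpkg
  have hψlip := lip_on_ball (convex_ball z₀t ρ₂) hψpkg
  have hφy₀ : φ y₀t = z₀t := by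
    show e3.symm (f (P.symm (e3 (e3.symm (g x₀))))) = e3.symm (f x₀)
    rw [e3.apply_symm_apply, hιy₀]
  have hy₀mem : y₀t ∈ Metric.ball y₀t ρ := Metric.mem_ball_self hρpos
  have hmaps : ∀ z ∈ Metric.ball y₀t ρ, φ z ∈ Metric.ball z₀t ρ₂ := by
    intro z hz
    rw [Metric.mem_ball, dist_eq_norm, ← hφy₀]
    calc ‖φ z - φ y₀t‖ ≤ ‖z - y₀t‖ := hφlip z hz y₀t hy₀mem
      _ < ρ := by rw [← dist_eq_norm]; exact hz
      _ ≤ ρ₂ := min_le_right _ _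
  have hleft : ∀ z ∈ Metric.ball y₀t ρ, ψ (φ z) = z := by
    intro z hz
    obtain ⟨hztgt, hzW⟩ := hmemT z hz
    obtain ⟨⟨hzB, hzsrc⟩, hzinv⟩ := hzW
    show e3.symm (g (PF.symm (e3 (e3.symm (f (P.symm (e3 z))))))) = z
    rw [e3.apply_symm_apply]
    rw [show PF.symm (f (P.symm (e3 z))) = P.symm (e3 z) from hzinv]
    rw [show g (P.symm (e3 z)) = e3 z from P.right_inv hztgt, e3.symm_apply_apply]
  have hiso : ∀ a ∈ Metric.ball y₀t ρ, ∀ b ∈ Metric.ball y₀t ρ,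
      ‖φ a - φ b‖ = ‖a - b‖ := by
    intro a ha b hb
    refine le_antisymm (hφlip a ha b hb) ?_
    have h1 := hψlip (φ a) (hmaps a ha) (φ b) (hmaps b hb)
    rwa [hleft a ha, hleft b hb] at h1
  obtain ⟨w, horth, haff⟩ := isom_affine hρpos hiso
  -- final radius
  have hev : {x | P.symm (g x) = x} ∈ nhds x₀ := P.eventually_left_inverse hx₀src
  have hgc : ContinuousAt g x₀ := hg.continuousOn.continuousAt (hB.mem_nhds hx₀)
  have hpre : g ⁻¹' (Metric.ball (g x₀) (ρ/2)) ∈ nhds x₀ :=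
    hgc.preimage_mem_nhds (Metric.ball_mem_nhds _ (by positivity))
  obtain ⟨r, hrpos, hrsub⟩ := Metric.mem_nhds_iff.mp
    (Filter.inter_mem (Filter.inter_mem (hB.mem_nhds hx₀) hev) hpre)
  refine ⟨r, hrpos, fun x hx => (hrsub hx).1.1, ?_⟩
  set Q : Matrix (Fin 3) (Fin 3) ℝ := Matrix.of fun j i => (w i) j with hQdef
  refine ⟨Q, f x₀ - Q.mulVec (g x₀), ?_, ?_⟩
  · ext i j
    have h1 : (Qᵀ * Q) i j = ∑ k, (w i) k * (w j) k := by
      simp [Matrix.mul_apply, Matrix.transpose_apply, hQdef]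
    have h2 : (inner ℝ (w i) (w j) : ℝ) = ∑ k, (w i) k * (w j) k := by
      rw [PiLp.inner_apply]; simp [RCLike.inner_apply, mul_comm]
    rw [h1, ← h2, horth i j, Matrix.one_apply]
  · intro x hx
    obtain ⟨⟨hxB, hxinv⟩, hxball⟩ := hrsub hx
    set z : E3 := e3.symm (g x) with hzdef
    have hzmem : z ∈ Metric.ball y₀t ρ := by
      rw [Metric.mem_ball, dist_eq_norm]
      calc ‖z - y₀t‖ = ‖(e3.symm (g x - g x₀) : E3)‖ := by rw [map_sub]
        _ ≤ 2 * ‖g x - g x₀‖ := euc_le_sup _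
        _ < 2 * (ρ/2) := by
            have h := Metric.mem_ball.mp hxball
            rw [dist_eq_norm] at h
            linarith
        _ = ρ := by ring
    have h3 := haff z hzmem
    have hφz : φ z = e3.symm (f x) := by
      show e3.symm (f (P.symm (e3 (e3.symm (g x))))) = e3.symm (f x)
      rw [e3.apply_symm_apply]
      rw [show P.symm (g x) = x from hxinv]
    rw [hφz, hφy₀] at h3
    -- h3 : e3.symm (f x) = z₀t + ∑ i, (z i - y₀t i) • w i
    have h5 := congrArg e3 h3
    rw [e3.apply_symm_apply, map_add, hz₀tdef, e3.apply_symm_apply, map_sum] at h5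
    simp only [_root_.map_smul] at h5
    -- h5 : f x = f x₀ + ∑ i, (z i - y₀t i) • e3 (w i)
    funext j
    have h6 := congrFun h5 j
    have h7 : (f x₀ + ∑ i, (z i - y₀t i) • e3 (w i)) j
        = f x₀ j + ∑ i, (g x i - g x₀ i) * (w i) j := by
      simp only [Pi.add_apply, Finset.sum_apply, Pi.smul_apply, smul_eq_mul]
      rfl
    rw [h7] at h6
    have h8 : (Q.mulVec (g x) + (f x₀ - Q.mulVec (g x₀))) j
        = ∑ i, (w i) j * g x i + (f x₀ j - ∑ i, (w i) j * g x₀ i) := by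
      simp [Matrix.mulVec, dotProduct, hQdef]
    rw [h6, h8]
    have h9 : ∑ i, (g x i - g x₀ i) * (w i) j
        = ∑ i, (w i) j * g x i - ∑ i, (w i) j * g x₀ i := by
      rw [← Finset.sum_sub_distrib]
      exact Finset.sum_congr rfl fun i _ => by ring
    rw [h9]
    ring


lemma deriv_of_affine {B : Set (Fin 3 → ℝ)} (hB : IsOpen B)
    {f g : (Fin 3 → ℝ) → (Fin 3 → ℝ)}
    (hf : ContDiffOn ℝ 1 f B) (hg : ContDiffOn ℝ 1 g B)
    {Q : Matrix (Fin 3) (Fin 3) ℝ} {c : Fin 3 → ℝ} {s : Set (Fin 3 → ℝ)}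
    (hs : IsOpen s) (hsub : s ⊆ B)
    (hform : ∀ y ∈ s, f y = Q.mulVec (g y) + c) {x : Fin 3 → ℝ} (hx : x ∈ s) :
    jacobianMat B f x = Q * jacobianMat B g x := by
  have h1 : HasFDerivAt f (clm (jacobianMat B f x)) x := hasFDerivAt_of_jac hB hf (hsub hx)
  have h2 : HasFDerivAt (fun y => Q.mulVec (g y) + c)
      ((clm Q).comp (clm (jacobianMat B g x))) x :=
    ((clm Q).hasFDerivAt.comp x (hasFDerivAt_of_jac hB hg (hsub hx))).add_const c
  have h3 : HasFDerivAt f ((clm Q).comp (clm (jacobianMat B g x))) x := by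
    apply h2.congr_of_eventuallyEq
    filter_upwards [hs.mem_nhds hx] with y hy
    exact hform y hy
  have h4 := h1.unique h3
  ext i j
  have h5 := congrFun (congrArg (fun L : (Fin 3 → ℝ) →L[ℝ] (Fin 3 → ℝ) =>
    L (Pi.single j 1)) h4) i
  simp only [clm_apply, ContinuousLinearMap.coe_comp', Function.comp_apply,
    Matrix.mulVec_mulVec, mulVec_single_one] at h5
  exact h5

lemma global_rigid {B : Set (Fin 3 → ℝ)} (hB : IsOpen B) (hBconn : IsConnected B)
    {f g : (Fin 3 → ℝ) → (Fin 3 → ℝ)}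
    (hf : ContDiffOn ℝ 1 f B) (hg : ContDiffOn ℝ 1 g B)
    (hFdet : ∀ x ∈ B, 0 < (jacobianMat B f x).det)
    (hGdet : ∀ x ∈ B, 0 < (jacobianMat B g x).det)
    (hCG : ∀ x ∈ B, (jacobianMat B f x)ᵀ * jacobianMat B f x =
        (jacobianMat B g x)ᵀ * jacobianMat B g x) :
    ∃ Q c, Qᵀ * Q = 1 ∧ Q.det = 1 ∧ ∀ x ∈ B, f x = Q.mulVec (g x) + c := by
  classical
  have hFdet' : ∀ x ∈ B, (jacobianMat B f x).det ≠ 0 := fun x hx => ne_of_gt (hFdet x hx)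
  have hGdet' : ∀ x ∈ B, (jacobianMat B g x).det ≠ 0 := fun x hx => ne_of_gt (hGdet x hx)
  have hloc : ∀ x, x ∈ B → ∃ r, 0 < r ∧ Metric.ball x r ⊆ B ∧
      ∃ Q c, Qᵀ * Q = 1 ∧ ∀ y ∈ Metric.ball x r, f y = Q.mulVec (g y) + c := by
    intro x hx
    obtain ⟨r, hr, hsub, Q, c, horth, hform⟩ :=
      local_rigid hB hf hg hFdet' hGdet' hCG hx
    exact ⟨r, hr, hsub, Q, c, horth, hform⟩
  choose rd hrd hsubd Qd cd horthd hformd using hloc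
  set r : (Fin 3 → ℝ) → ℝ := fun x => if hx : x ∈ B then rd x hx else 1 with hrdef
  set u : (Fin 3 → ℝ) → Matrix (Fin 3) (Fin 3) ℝ × (Fin 3 → ℝ) :=
    fun x => if hx : x ∈ B then (Qd x hx, cd x hx) else (1, 0) with hudef
  have hQeq : ∀ x (hx : x ∈ B) y (hy : y ∈ B)
      (hyx : y ∈ Metric.ball x (rd x hx)), Qd y hy = Qd x hx ∧ cd y hy = cd x hx := by
    intro x hx y hy hyx
    have hGyi : IsUnit (jacobianMat B g y).det := isUnit_iff_ne_zero.2 (hGdet' y hy)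
    set s := Metric.ball x (rd x hx) ∩ Metric.ball y (rd y hy) with hsdef
    have hys : y ∈ s := ⟨hyx, Metric.mem_ball_self (hrd y hy)⟩
    have hsopen : IsOpen s := Metric.isOpen_ball.inter Metric.isOpen_ball
    have hssub : s ⊆ B := fun z hz => hsubd x hx hz.1
    have d1 : jacobianMat B f y = Qd x hx * jacobianMat B g y :=
      deriv_of_affine hB hf hg hsopen hssub
        (fun z hz => hformd x hx z hz.1) hys
    have d2 : jacobianMat B f y = Qd y hy * jacobianMat B g y :=
      deriv_of_affine hB hf hg hsopen hssub
        (fun z hz => hformd y hy z hz.2) hys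
    have hQQ : Qd y hy = Qd x hx := by
      have h6 : Qd y hy * jacobianMat B g y = Qd x hx * jacobianMat B g y :=
        d2 ▸ d1
      calc Qd y hy = Qd y hy * jacobianMat B g y * (jacobianMat B g y)⁻¹ :=
            (Matrix.mul_nonsing_inv_cancel_right _ _ hGyi).symm
        _ = Qd x hx * jacobianMat B g y * (jacobianMat B g y)⁻¹ := by rw [h6]
        _ = Qd x hx := Matrix.mul_nonsing_inv_cancel_right _ _ hGyi
    refine ⟨hQQ, ?_⟩
    have e1 : f y = (Qd x hx).mulVec (g y) + cd x hx := hformd x hx y hyx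
    have e2 : f y = (Qd y hy).mulVec (g y) + cd y hy :=
      hformd y hy y (Metric.mem_ball_self (hrd y hy))
    rw [hQQ] at e2
    have := e1.symm.trans e2
    exact (add_right_injective _ this).symm
  have hrpos : ∀ x ∈ B, 0 < r x := by
    intro x hx; rw [hrdef]; simp only [dif_pos hx]; exact hrd x hx
  have hulocal : ∀ x ∈ B, Metric.ball x (r x) ⊆ B ∧
      ∀ y ∈ Metric.ball x (r x), u y = u x := by
    intro x hx
    have hrx : r x = rd x hx := by rw [hrdef]; simp only [dif_pos hx]
    rw [hrx]
    refine ⟨hsubd x hx, fun y hy => ?_⟩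
    have hyB : y ∈ B := hsubd x hx hy
    obtain ⟨h1, h2⟩ := hQeq x hx y hyB hy
    rw [hudef]
    simp only [dif_pos hx, dif_pos hyB]
    exact Prod.ext h1 h2
  obtain ⟨x₀, hx₀⟩ := hBconn.nonempty
  refine ⟨Qd x₀ hx₀, cd x₀ hx₀, horthd x₀ hx₀, ?_, ?_⟩
  · -- determinant
    have hFQ : jacobianMat B f x₀ = Qd x₀ hx₀ * jacobianMat B g x₀ :=
      deriv_of_affine hB hf hg Metric.isOpen_ball (hsubd x₀ hx₀)
        (hformd x₀ hx₀) (Metric.mem_ball_self (hrd x₀ hx₀))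
    have hdet1 : (jacobianMat B f x₀).det =
        (Qd x₀ hx₀).det * (jacobianMat B g x₀).det := by rw [hFQ, Matrix.det_mul]
    have hdet2 : (Qd x₀ hx₀).det ^ 2 = 1 := by
      have := congrArg Matrix.det (horthd x₀ hx₀)
      rwa [Matrix.det_mul, Matrix.det_transpose, Matrix.det_one, ← sq] at this
    have hdetpos : 0 < (Qd x₀ hx₀).det := by
      have h1 := hFdet x₀ hx₀
      have h2 := hGdet x₀ hx₀
      by_contra hle
      push_neg at hle
      nlinarith
    nlinarith
  · intro x hx
    have hux := eq_on_connected hBconn.isPreconnected u r hrpos hulocal hx₀ hx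
    have hx1 : u x = (Qd x hx, cd x hx) := by rw [hudef]; simp only [dif_pos hx]
    have hx2 : u x₀ = (Qd x₀ hx₀, cd x₀ hx₀) := by rw [hudef]; simp only [dif_pos hx₀]
    rw [hx1, hx2, Prod.mk.injEq] at hux
    rw [← hux.1, ← hux.2]
    exact hformd x hx x (Metric.mem_ball_self (hrd x hx))


end RigidAux

open RigidAux

/-- If a motion `ζ(·, t)` of an open connected body `B ⊆ ℝ³` consists of `C¹`, injective,
orientation-preserving configurations whose right Cauchy–Green tensor is independent of
time, then the motion is rigid: `ζ(x, t) = R(t) ζ(x, 0) + b(t)` with `R(t) ∈ SO(3)` and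
`b(t) ∈ ℝ³` uniquely determined; moreover if `t ↦ ζ(x, t)` is `C²` for every `x ∈ B`,
then so are `R` and `b`. -/
theorem rigid_motion
    (B : Set (Fin 3 → ℝ)) (hB : IsOpen B) (hBconn : IsConnected B)
    (ζ : ℝ → (Fin 3 → ℝ) → (Fin 3 → ℝ))
    (hreg : ∀ t : ℝ, 0 ≤ t → ContDiffOn ℝ 1 (ζ t) B ∧ Set.InjOn (ζ t) B ∧
      ∀ x ∈ B, 0 < (jacobianMat B (ζ t) x).det)
    (hCG : ∀ t : ℝ, 0 ≤ t → ∀ x ∈ B,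
      (jacobianMat B (ζ t) x)ᵀ * jacobianMat B (ζ t) x =
      (jacobianMat B (ζ 0) x)ᵀ * jacobianMat B (ζ 0) x) :
    ∃ (R : ℝ → Matrix (Fin 3) (Fin 3) ℝ) (b : ℝ → (Fin 3 → ℝ)),
      (∀ t : ℝ, 0 ≤ t → ((R t)ᵀ * R t = 1 ∧ (R t).det = 1) ∧
        ∀ x ∈ B, ζ t x = (R t).mulVec (ζ 0 x) + b t) ∧
      (∀ t : ℝ, 0 ≤ t → ∀ (R' : Matrix (Fin 3) (Fin 3) ℝ) (b' : Fin 3 → ℝ),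
        (R'ᵀ * R' = 1 ∧ R'.det = 1) → (∀ x ∈ B, ζ t x = R'.mulVec (ζ 0 x) + b') →
        R' = R t ∧ b' = b t) ∧
      ((∀ x ∈ B, ContDiffOn ℝ 2 (fun t => ζ t x) (Set.Ici (0:ℝ))) →
        (∀ i j : Fin 3, ContDiffOn ℝ 2 (fun t => R t i j) (Set.Ici (0:ℝ))) ∧
        ∀ i : Fin 3, ContDiffOn ℝ 2 (fun t => b t i) (Set.Ici (0:ℝ))) := by
  classical
  obtain ⟨hg, hginj, hGdet⟩ := hreg 0 le_rfl
  obtain ⟨x₀, hx₀⟩ := hBconn.nonempty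
  set g := ζ 0 with hgdef
  -- local inverse of g at x₀ producing anchor points
  have hGi : Invertible (jacobianMat B g x₀) :=
    (jacobianMat B g x₀).invertibleOfIsUnitDet
      (isUnit_iff_ne_zero.2 (ne_of_gt (hGdet x₀ hx₀)))
  have hgstrict : HasStrictFDerivAt g
      (((jacobianMat B g x₀).toLinearEquiv' hGi).toContinuousLinearEquiv :
        (Fin 3 → ℝ) →L[ℝ] (Fin 3 → ℝ)) x₀ := by
    have h1 : HasStrictFDerivAt g (fderiv ℝ g x₀) x₀ :=
      (hg.contDiffAt (hB.mem_nhds hx₀)).hasStrictFDerivAt one_ne_zero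
    have h2 : fderiv ℝ g x₀ = clm (jacobianMat B g x₀) :=
      (hasFDerivAt_of_jac hB hg hx₀).fderiv
    rw [cle_coe, ← h2]
    exact h1
  set P := hgstrict.toOpenPartialHomeomorph g with hPdef
  have hx₀src : x₀ ∈ P.source := hgstrict.mem_toOpenPartialHomeomorph_source
  have hy₀tgt : g x₀ ∈ P.target := hgstrict.image_mem_toOpenPartialHomeomorph_target
  have hιy₀ : P.symm (g x₀) = x₀ := P.left_inv hx₀src
  have hT0 : P.target ∩ ⇑P.symm ⁻¹' B ∈ nhds (g x₀) :=
    Filter.inter_mem (P.open_target.mem_nhds hy₀tgt)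
      ((P.continuousAt_symm hy₀tgt).preimage_mem_nhds
        (by rw [hιy₀]; exact hB.mem_nhds hx₀))
  obtain ⟨δ, hδpos, hδ⟩ := Metric.mem_nhds_iff.mp hT0
  set ε := δ/2 with hεdef
  have hεpos : 0 < ε := by positivity
  set ys : Fin 3 → (Fin 3 → ℝ) := fun i => g x₀ + ε • (Pi.single i 1 : Fin 3 → ℝ) with hysdef
  have hysmem : ∀ i, ys i ∈ P.target ∩ ⇑P.symm ⁻¹' B := by
    intro i
    apply hδ
    rw [Metric.mem_ball, dist_eq_norm]
    have h1 : ys i - g x₀ = ε • (Pi.single i 1 : Fin 3 → ℝ) := by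
      rw [hysdef]; exact add_sub_cancel_left _ _
    rw [h1, norm_smul, Pi.norm_single, norm_one, Real.norm_eq_abs, abs_of_pos hεpos,
      mul_one]
    rw [hεdef]; linarith
  set xs : Fin 3 → (Fin 3 → ℝ) := fun i => P.symm (ys i) with hxsdef
  have hxsB : ∀ i, xs i ∈ B := fun i => (hysmem i).2
  have hgxs : ∀ i, g (xs i) = ys i := fun i => P.right_inv (hysmem i).1
  -- candidate rotation and translation
  set R : ℝ → Matrix (Fin 3) (Fin 3) ℝ :=
    fun t => Matrix.of fun j i => (ζ t (xs i) j - ζ t x₀ j)/ε with hRdef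
  set b : ℝ → (Fin 3 → ℝ) := fun t => ζ t x₀ - (R t).mulVec (g x₀) with hbdef
  -- the key uniqueness computation
  have K : ∀ (h : (Fin 3 → ℝ) → (Fin 3 → ℝ)) (Q : Matrix (Fin 3) (Fin 3) ℝ)
      (cc : Fin 3 → ℝ), (∀ x ∈ B, h x = Q.mulVec (g x) + cc) →
      Q = Matrix.of (fun j i => (h (xs i) j - h x₀ j)/ε) ∧
      cc = h x₀ - Q.mulVec (g x₀) := by
    intro h Q cc hform
    constructor
    · ext j i
      rw [Matrix.of_apply]
      have e1 : h (xs i) j = Q.mulVec (ys i) j + cc j := by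
        rw [hform (xs i) (hxsB i), hgxs i]; rfl
      have e2 : h x₀ j = Q.mulVec (g x₀) j + cc j := by
        rw [hform x₀ hx₀]; rfl
      have e3 : Q.mulVec (ys i) j = Q.mulVec (g x₀) j + ε * Q j i := by
        rw [hysdef]
        rw [Matrix.mulVec_add, Matrix.mulVec_smul]
        rw [mulVec_single_one]
        simp [smul_eq_mul]
      rw [e1, e2, e3]
      field_simp
      ring
    · have := hform x₀ hx₀
      rw [this]
      abel
  refine ⟨R, b, ?_, ?_, ?_⟩
  · -- existence
    intro t ht
    obtain ⟨hft, hfinj, hFdet⟩ := hreg t ht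
    obtain ⟨Q, c, horthQ, hdetQ, hformQ⟩ :=
      global_rigid hB hBconn hft hg hFdet hGdet (hCG t ht)
    obtain ⟨hQR, hcb⟩ := K (ζ t) Q c hformQ
    have hQR' : Q = R t := hQR
    have hbc : b t = c := by
      rw [hbdef, hcb, hQR']
    refine ⟨⟨by rw [← hQR']; exact horthQ, by rw [← hQR']; exact hdetQ⟩, ?_⟩
    intro x hx
    rw [← hQR', hbc]
    exact hformQ x hx
  · -- uniqueness
    intro t ht R' b' hprop hform'
    obtain ⟨hQ', hcb'⟩ := K (ζ t) R' b' hform'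
    have hQR' : R' = R t := hQ'
    refine ⟨hQR', ?_⟩
    rw [hcb', hQR']
  · -- regularity
    intro hsm
    have hRent : ∀ i j : Fin 3, ContDiffOn ℝ 2 (fun t => R t i j) (Set.Ici (0:ℝ)) := by
      intro i j
      have hA : ContDiffOn ℝ 2 (fun t => ζ t (xs j)) (Set.Ici (0:ℝ)) := hsm (xs j) (hxsB j)
      have hB0 : ContDiffOn ℝ 2 (fun t => ζ t x₀) (Set.Ici (0:ℝ)) := hsm x₀ hx₀
      have hAi : ContDiffOn ℝ 2 (fun t => ζ t (xs j) i) (Set.Ici (0:ℝ)) :=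
        (ContinuousLinearMap.proj (R := ℝ) (φ := fun _ : Fin 3 => ℝ)
          i).contDiff.comp_contDiffOn hA
      have hB0i : ContDiffOn ℝ 2 (fun t => ζ t x₀ i) (Set.Ici (0:ℝ)) :=
        (ContinuousLinearMap.proj (R := ℝ) (φ := fun _ : Fin 3 => ℝ)
          i).contDiff.comp_contDiffOn hB0
      exact (hAi.sub hB0i).div_const ε
    refine ⟨hRent, ?_⟩
    intro i
    have hB0i : ContDiffOn ℝ 2 (fun t => ζ t x₀ i) (Set.Ici (0:ℝ)) :=
      (ContinuousLinearMap.proj (R := ℝ) (φ := fun _ : Fin 3 => ℝ)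
        i).contDiff.comp_contDiffOn (hsm x₀ hx₀)
    have hsum : ContDiffOn ℝ 2 (fun t => ∑ k, R t i k * g x₀ k) (Set.Ici (0:ℝ)) :=
      ContDiffOn.sum (fun k _ => (hRent i k).mul contDiffOn_const)
    exact hB0i.sub hsum
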